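/- arXiv:2405.03112 — 2 statements merged into one kernel-verified Lean document; each statement's English description precedes it below -/
import Mathlib

section
/- Let k ≥ 11, let R be the rainbow k-clique, let a = k!/(k^k − k), let γ > 0, and let n ≥ k be an integer satisfying a·(n^{k−1}/(k−1)! − binom(n−1,k−1)) < γ·binom(n−1,k−1) − binom(n−2,k−2). If H is an n-vertex T-edge-colored complete graph with I(R,H) = I(R,n) and I(R,H) ≥ (a+γ)·binom(n,k), then every vertex x ∈ V(H) satisfies d(x) ≥ a·n^{k−1}/(k−1)!, where d(x) is the number of k-subsets of V(H) containing x whose induced coloring is isomorphic to R. -/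
open Finset Filter

open scoped Classical

section Defs

variable {T : Type}

/-- A coloring of the complete graph is symmetric. -/
def IsSym {V : Type} (χ : V → V → T) : Prop := ∀ u v, χ u v = χ v u

/-- `copyCount k n R χ` : the number of `k`-element subsets of `Fin n` whose coloring
induced by `χ` is isomorphic (as an edge-colored complete graph) to `R`. -/
noncomputable def copyCount (k n : ℕ) (R : Fin k → Fin k → T) (χ : Fin n → Fin n → T) : ℕ :=
  ((Finset.powersetCard k (Finset.univ : Finset (Fin n))).filter
    (fun S => ∃ φ : Fin k → Fin n, Function.Injective φ ∧ (∀ a, φ a ∈ S) ∧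
      ∀ a b : Fin k, a ≠ b → χ (φ a) (φ b) = R a b)).card

/-- `maxCopyCount k n R = I(R,n)` : the maximum of `copyCount` over all symmetric
`T`-colorings of the complete graph on `n` vertices. -/
noncomputable def maxCopyCount [Fintype T] (k n : ℕ) (R : Fin k → Fin k → T) : ℕ :=
  Finset.sup ((Finset.univ : Finset (Fin n → Fin n → T)).filter (fun χ => IsSym χ))
    (fun χ => copyCount k n R χ)

/-- `vertDeg k n R χ x = d(x)` : the number of `k`-subsets containing `x` whose induced
coloring is isomorphic to `R`. -/
noncomputable def vertDeg (k n : ℕ) (R : Fin k → Fin k → T) (χ : Fin n → Fin n → T)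
    (x : Fin n) : ℕ :=
  ((Finset.powersetCard k (Finset.univ : Finset (Fin n))).filter
    (fun S => x ∈ S ∧ ∃ φ : Fin k → Fin n, Function.Injective φ ∧ (∀ a, φ a ∈ S) ∧
      ∀ a b : Fin k, a ≠ b → χ (φ a) (φ b) = R a b)).card

/-- `embCount k n R χ i x = d_i(x)` : the number of injective color-preserving maps
`φ : Fin k → Fin n` with `φ i = x`. -/
noncomputable def embCount (k n : ℕ) (R : Fin k → Fin k → T) (χ : Fin n → Fin n → T)
    (i : Fin k) (x : Fin n) : ℕ :=
  ((Finset.univ : Finset (Fin k → Fin n)).filter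
    (fun φ => Function.Injective φ ∧ φ i = x ∧
      ∀ a b : Fin k, a ≠ b → χ (φ a) (φ b) = R a b)).card

/-- `Nset k n R χ i x = N_i(x)` : the set of vertices `y ≠ x` lying in the image of some
injective color-preserving map `φ : Fin k → Fin n` with `φ i = x`. -/
noncomputable def Nset (k n : ℕ) (R : Fin k → Fin k → T) (χ : Fin n → Fin n → T)
    (i : Fin k) (x : Fin n) : Finset (Fin n) :=
  (Finset.univ : Finset (Fin n)).filter
    (fun y => y ≠ x ∧ ∃ φ : Fin k → Fin n, Function.Injective φ ∧ φ i = x ∧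
      (∀ a b : Fin k, a ≠ b → χ (φ a) (φ b) = R a b) ∧ ∃ a, φ a = y)

/-- `colorDeg χ x c = d_c(x)` : the number of vertices `y ≠ x` with `χ x y = c`. -/
noncomputable def colorDeg {n : ℕ} (χ : Fin n → Fin n → T) (x : Fin n) (c : T) : ℕ :=
  ((Finset.univ : Finset (Fin n)).filter (fun y => y ≠ x ∧ χ x y = c)).card

end Defs

/-- The rainbow `k`-clique: the edge `ij` gets color `{i,j}`. -/
def rainbowClique (k : ℕ) : Fin k → Fin k → Finset (Fin k) := fun i j => {i, j}

/-- A rainbow graph `G` on `[k]`, viewed as an edge-colored complete graph: edges `ij ∈ E`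
get color `{i,j}`, non-edges get color `∅`. -/
noncomputable def rainbowOf {k : ℕ} (G : SimpleGraph (Fin k)) :
    Fin k → Fin k → Finset (Fin k) :=
  fun i j => if G.Adj i j then {i, j} else ∅

/-- `B(x)` : the set of neighbors of `x`, i.e. vertices joined to `x` by a non-`∅` color. -/
noncomputable def Bset {k n : ℕ} (χ : Fin n → Fin n → Finset (Fin k)) (x : Fin n) :
    Finset (Fin n) :=
  (Finset.univ : Finset (Fin n)).filter (fun y => y ≠ x ∧ χ x y ≠ ∅)

/-- The degree of vertex `i` in the graph `G`. -/
noncomputable def degR {k : ℕ} (G : SimpleGraph (Fin k)) (i : Fin k) : ℕ :=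
  ((Finset.univ : Finset (Fin k)).filter (fun j => G.Adj i j)).card

section CloneAux

variable {T : Type} {k n : ℕ}

/-- The set of `k`-subsets inducing a copy of `R`. -/
noncomputable def copiesSet (R : Fin k → Fin k → T) (χ : Fin n → Fin n → T) :
    Finset (Finset (Fin n)) :=
  (Finset.powersetCard k (Finset.univ : Finset (Fin n))).filter
    (fun S => ∃ φ : Fin k → Fin n, Function.Injective φ ∧ (∀ a, φ a ∈ S) ∧
      ∀ a b : Fin k, a ≠ b → χ (φ a) (φ b) = R a b)

lemma copyCount_eq_card (R : Fin k → Fin k → T) (χ : Fin n → Fin n → T) :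
    copyCount k n R χ = (copiesSet R χ).card := rfl

lemma vertDeg_eq_card (R : Fin k → Fin k → T) (χ : Fin n → Fin n → T) (x : Fin n) :
    vertDeg k n R χ x = ((copiesSet R χ).filter (fun S => x ∈ S)).card := by
  unfold vertDeg copiesSet
  rw [Finset.filter_filter]
  apply congrArg Finset.card
  ext S
  simp only [Finset.mem_filter]
  tauto

lemma sum_vertDeg (R : Fin k → Fin k → T) (χ : Fin n → Fin n → T) :
    ∑ x : Fin n, vertDeg k n R χ x = k * copyCount k n R χ := by
  have h1 : ∀ x : Fin n, vertDeg k n R χ x = ∑ S ∈ copiesSet R χ, if x ∈ S then 1 else 0 := by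
    intro x; rw [vertDeg_eq_card, Finset.card_filter]
  simp only [h1]
  rw [Finset.sum_comm]
  have h2 : ∀ S ∈ copiesSet R χ, (∑ x : Fin n, if x ∈ S then 1 else 0) = k := by
    intro S hS
    have hc : S.card = k := by
      have := (Finset.mem_filter.mp hS).1
      simpa [Finset.mem_powersetCard_univ] using this
    calc (∑ x : Fin n, if x ∈ S then 1 else 0)
        = ∑ x ∈ Finset.univ ∩ S, (1 : ℕ) := by rw [Finset.sum_ite_mem]
      _ = S.card := by rw [Finset.univ_inter, Finset.sum_const, smul_eq_mul, mul_one]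
      _ = k := hc
  rw [Finset.sum_congr rfl h2, Finset.sum_const, smul_eq_mul, copyCount_eq_card, mul_comm]

/-- The graph obtained by replacing `x` with a clone of `y`. -/
noncomputable def cloneχ (χ : Fin n → Fin n → T) (x y : Fin n) : Fin n → Fin n → T :=
  fun v w => if v = w then χ v w else
    χ (if v = x then y else v) (if w = x then y else w)

lemma clone_sym {χ : Fin n → Fin n → T} (h : IsSym χ) (x y : Fin n) :
    IsSym (cloneχ χ x y) := by
  intro u v
  unfold cloneχ
  by_cases huv : u = v
  · subst huv; simp
  · rw [if_neg huv, if_neg (Ne.symm huv)]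
    exact h _ _

lemma copyA (R : Fin k → Fin k → T) (χ : Fin n → Fin n → T) (x y : Fin n)
    {S : Finset (Fin n)} (hS : S ∈ copiesSet R χ) (hx : x ∉ S) :
    S ∈ copiesSet R (cloneχ χ x y) := by
  obtain ⟨hP, φ, hinj, hmem, hcol⟩ := Finset.mem_filter.mp hS
  refine Finset.mem_filter.mpr ⟨hP, φ, hinj, hmem, ?_⟩
  intro a b hab
  have ha : φ a ≠ x := fun h => hx (h ▸ hmem a)
  have hb : φ b ≠ x := fun h => hx (h ▸ hmem b)
  have hne : φ a ≠ φ b := fun h => hab (hinj h)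
  unfold cloneχ
  rw [if_neg hne, if_neg ha, if_neg hb]
  exact hcol a b hab

lemma copyB (R : Fin k → Fin k → T) (χ : Fin n → Fin n → T) (x y : Fin n)
    {S : Finset (Fin n)} (hS : S ∈ copiesSet R χ) (hx : x ∉ S) (hy : y ∈ S) :
    insert x (S.erase y) ∈ copiesSet R (cloneχ χ x y) := by
  obtain ⟨hP, φ, hinj, hmem, hcol⟩ := Finset.mem_filter.mp hS
  have hcard : S.card = k := by simpa [Finset.mem_powersetCard_univ] using hP
  set g : Fin n → Fin n := fun v => if v = y then x else v with hg
  have hginj : ∀ u ∈ S, ∀ w ∈ S, g u = g w → u = w := by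
    intro u hu w hw h
    by_cases h1 : u = y <;> by_cases h2 : w = y
    · rw [h1, h2]
    · exfalso; apply hx; simp only [hg, if_pos h1, if_neg h2] at h; rwa [h]
    · exfalso; apply hx; simp only [hg, if_neg h1, if_pos h2] at h; rwa [← h]
    · simpa only [hg, if_neg h1, if_neg h2] using h
  have hgS : ∀ u ∈ S, g u ∈ insert x (S.erase y) := by
    intro u hu
    by_cases h : u = y
    · simp [hg, h]
    · rw [hg]; simp only [if_neg h]
      exact Finset.mem_insert_of_mem (Finset.mem_erase.mpr ⟨h, hu⟩)
  have hf : ∀ u ∈ S, (if g u = x then y else g u) = u := by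
    intro u hu
    by_cases h : u = y
    · have hgx : g u = x := by simp [hg, h]
      rw [if_pos hgx, h]
    · have hux : u ≠ x := fun hh => hx (hh ▸ hu)
      have hgu : g u = u := by simp [hg, h]
      rw [hgu, if_neg hux]
  refine Finset.mem_filter.mpr ⟨?_, g ∘ φ, ?_, ?_, ?_⟩
  · rw [Finset.mem_powersetCard_univ,
      Finset.card_insert_of_notMem (fun h => hx (Finset.mem_of_mem_erase h)),
      Finset.card_erase_of_mem hy, hcard]
    have hk1 : 1 ≤ k := by rw [← hcard]; exact Finset.card_pos.mpr ⟨y, hy⟩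
    omega
  · intro a b hab
    exact hinj (hginj _ (hmem a) _ (hmem b) hab)
  · intro a; exact hgS _ (hmem a)
  · intro a b hab
    have hne : φ a ≠ φ b := fun h => hab (hinj h)
    have hgne : g (φ a) ≠ g (φ b) := fun h => hne (hginj _ (hmem a) _ (hmem b) h)
    show cloneχ χ x y (g (φ a)) (g (φ b)) = R a b
    unfold cloneχ
    rw [if_neg hgne, hf _ (hmem a), hf _ (hmem b)]
    exact hcol a b hab

lemma card_contain_two (R : Fin k → Fin k → T) (χ : Fin n → Fin n → T)
    (x y : Fin n) (hxy : x ≠ y) :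
    ((copiesSet R χ).filter (fun S => y ∈ S ∧ x ∈ S)).card ≤ (n - 2).choose (k - 2) := by
  have hsub : ∀ S ∈ (copiesSet R χ).filter (fun S => y ∈ S ∧ x ∈ S),
      (S.erase x).erase y ∈
        Finset.powersetCard (k - 2) ((Finset.univ.erase x).erase y : Finset (Fin n)) := by
    intro S hS
    obtain ⟨hSc, hyS, hxS⟩ := Finset.mem_filter.mp hS
    have hcard : S.card = k := by
      have := (Finset.mem_filter.mp hSc).1
      simpa [Finset.mem_powersetCard_univ] using this
    rw [Finset.mem_powersetCard]
    constructor
    · exact Finset.erase_subset_erase _ (Finset.erase_subset_erase _ (Finset.subset_univ S))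
    · rw [Finset.card_erase_of_mem (Finset.mem_erase.mpr ⟨hxy.symm, hyS⟩),
        Finset.card_erase_of_mem hxS, hcard]
      omega
  have hinj : ∀ S₁ ∈ (copiesSet R χ).filter (fun S => y ∈ S ∧ x ∈ S),
      ∀ S₂ ∈ (copiesSet R χ).filter (fun S => y ∈ S ∧ x ∈ S),
      (S₁.erase x).erase y = (S₂.erase x).erase y → S₁ = S₂ := by
    intro S₁ h1 S₂ h2 h
    obtain ⟨-, hy1, hx1⟩ := Finset.mem_filter.mp h1
    obtain ⟨-, hy2, hx2⟩ := Finset.mem_filter.mp h2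
    have e1 : insert x (insert y ((S₁.erase x).erase y)) = S₁ := by
      rw [Finset.insert_erase (Finset.mem_erase.mpr ⟨hxy.symm, hy1⟩), Finset.insert_erase hx1]
    have e2 : insert x (insert y ((S₂.erase x).erase y)) = S₂ := by
      rw [Finset.insert_erase (Finset.mem_erase.mpr ⟨hxy.symm, hy2⟩), Finset.insert_erase hx2]
    rw [← e1, ← e2, h]
  calc ((copiesSet R χ).filter (fun S => y ∈ S ∧ x ∈ S)).card
      ≤ (Finset.powersetCard (k - 2) ((Finset.univ.erase x).erase y : Finset (Fin n))).card :=
        Finset.card_le_card_of_injOn _ hsub hinj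
    _ = (((Finset.univ.erase x).erase y : Finset (Fin n)).card).choose (k - 2) :=
        Finset.card_powersetCard _ _
    _ = (n - 2).choose (k - 2) := by
        rw [Finset.card_erase_of_mem (Finset.mem_erase.mpr ⟨hxy.symm, Finset.mem_univ y⟩),
          Finset.card_erase_of_mem (Finset.mem_univ x), Finset.card_univ, Fintype.card_fin]
        congr 1

end CloneAux

/-- minimum degree in a maximizer for the rainbow `k`-clique, `k ≥ 11`:
every vertex lies in at least `a·n^{k−1}/(k−1)!` copies of `R`. -/
theorem min_degree_in_maximizer (k n : ℕ) (hk : 11 ≤ k) (hn : k ≤ n) (γ : ℝ) (hγ : 0 < γ)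
    (hineq : ((k.factorial : ℝ) / ((k : ℝ) ^ k - k)) *
        ((n : ℝ) ^ (k - 1) / ((k - 1).factorial : ℝ) - ((n - 1).choose (k - 1) : ℝ)) <
      γ * ((n - 1).choose (k - 1) : ℝ) - ((n - 2).choose (k - 2) : ℝ))
    (χ : Fin n → Fin n → Finset (Fin k)) (hχ : IsSym χ)
    (hmax : copyCount k n (rainbowClique k) χ = maxCopyCount k n (rainbowClique k))
    (hbig : (((k.factorial : ℝ) / ((k : ℝ) ^ k - k)) + γ) * (n.choose k : ℝ) ≤
      (copyCount k n (rainbowClique k) χ : ℝ)) :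
    ∀ x : Fin n,
      ((k.factorial : ℝ) / ((k : ℝ) ^ k - k)) * (n : ℝ) ^ (k - 1) / ((k - 1).factorial : ℝ) ≤
        (vertDeg k n (rainbowClique k) χ x : ℝ) := by
  
  intro x
  by_contra hcon
  push_neg at hcon
  set a : ℝ := (k.factorial : ℝ) / ((k : ℝ) ^ k - k) with ha
  set R := rainbowClique k with hR
  -- pick a vertex of maximal degree
  obtain ⟨y, -, hy⟩ := Finset.exists_max_image (Finset.univ : Finset (Fin n))
    (fun v => vertDeg k n R χ v) ⟨x, Finset.mem_univ x⟩
  -- sum of degrees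
  have hsum := sum_vertDeg R χ
  have hkI : k * copyCount k n R χ ≤ n * vertDeg k n R χ y := by
    rw [← hsum]
    calc ∑ v : Fin n, vertDeg k n R χ v
        ≤ ∑ _v : Fin n, vertDeg k n R χ y :=
          Finset.sum_le_sum (fun v _ => hy v (Finset.mem_univ v))
      _ = n * vertDeg k n R χ y := by
          rw [Finset.sum_const, Finset.card_univ, Fintype.card_fin, smul_eq_mul]
  -- choose identity : n * C(n-1,k-1) = C(n,k) * k
  have h1n : 1 ≤ n := by omega
  have h1k : 1 ≤ k := by omega
  have hchoose : n * (n - 1).choose (k - 1) = n.choose k * k := by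
    have := Nat.add_one_mul_choose_eq (n - 1) (k - 1)
    rwa [Nat.sub_add_cancel h1n,
      Nat.sub_add_cancel h1k] at this
  have hn0 : (0 : ℝ) < n := by positivity
  -- lower bound on max degree
  have hC1 : (a + γ) * ((n - 1).choose (k - 1) : ℝ) ≤ (vertDeg k n R χ y : ℝ) := by
    have hbk : ((a + γ) * (n.choose k : ℝ)) * k ≤ (copyCount k n R χ : ℝ) * k :=
      mul_le_mul_of_nonneg_right hbig (by positivity)
    have hkI' : (k : ℝ) * (copyCount k n R χ : ℝ) ≤ (n : ℝ) * (vertDeg k n R χ y : ℝ) := by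
      exact_mod_cast hkI
    have hch' : (n : ℝ) * ((n - 1).choose (k - 1) : ℝ) = (n.choose k : ℝ) * k := by
      exact_mod_cast hchoose
    have key : (n : ℝ) * ((a + γ) * ((n - 1).choose (k - 1) : ℝ)) ≤
        (n : ℝ) * (vertDeg k n R χ y : ℝ) := by
      calc (n : ℝ) * ((a + γ) * ((n - 1).choose (k - 1) : ℝ))
          = (a + γ) * ((n : ℝ) * ((n - 1).choose (k - 1) : ℝ)) := by ring
        _ = (a + γ) * ((n.choose k : ℝ) * k) := by rw [hch']
        _ = ((a + γ) * (n.choose k : ℝ)) * k := by ring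
        _ ≤ (copyCount k n R χ : ℝ) * k := hbk
        _ = (k : ℝ) * (copyCount k n R χ : ℝ) := by ring
        _ ≤ (n : ℝ) * (vertDeg k n R χ y : ℝ) := hkI'
    exact le_of_mul_le_mul_left key hn0
  -- rearranged hypothesis inequality
  have hre : a * (n : ℝ) ^ (k - 1) / ((k - 1).factorial : ℝ) + ((n - 2).choose (k - 2) : ℝ)
      < (a + γ) * ((n - 1).choose (k - 1) : ℝ) := by
    have hx : a * ((n : ℝ) ^ (k - 1) / ((k - 1).factorial : ℝ) - ((n - 1).choose (k - 1) : ℝ))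
        = a * (n : ℝ) ^ (k - 1) / ((k - 1).factorial : ℝ)
          - a * ((n - 1).choose (k - 1) : ℝ) := by ring
    rw [hx] at hineq
    linarith
  -- x ≠ y
  have hC2nn : (0 : ℝ) ≤ ((n - 2).choose (k - 2) : ℝ) := by positivity
  have hdxy : (vertDeg k n R χ x : ℝ) < (vertDeg k n R χ y : ℝ) := by linarith
  have hxy : x ≠ y := by
    intro h; rw [h] at hdxy; exact lt_irrefl _ hdxy
  -- split counts
  set χ' := cloneχ χ x y with hχ'
  have hIsplit : copyCount k n R χ =
      ((copiesSet R χ).filter (fun S => x ∉ S)).card + vertDeg k n R χ x := by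
    rw [copyCount_eq_card, vertDeg_eq_card]
    have h := Finset.card_filter_add_card_filter_not
      (s := copiesSet R χ) (p := fun S => x ∈ S)
    beta_reduce at h
    omega
  have hDy : vertDeg k n R χ y =
      (((copiesSet R χ).filter (fun S => y ∈ S)).filter (fun S => x ∉ S)).card +
      (((copiesSet R χ).filter (fun S => y ∈ S)).filter (fun S => x ∈ S)).card := by
    rw [vertDeg_eq_card]
    have h := Finset.card_filter_add_card_filter_not
      (s := (copiesSet R χ).filter (fun S => y ∈ S)) (p := fun S => x ∈ S)
    beta_reduce at h
    omega
  have hDle : (((copiesSet R χ).filter (fun S => y ∈ S)).filter (fun S => x ∈ S)).card ≤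
      (n - 2).choose (k - 2) := by
    rw [Finset.filter_filter]
    exact card_contain_two R χ x y hxy
  -- copies in the clone graph
  have hA' : ((copiesSet R χ).filter (fun S => x ∉ S)).card ≤
      ((copiesSet R χ').filter (fun S => x ∉ S)).card := by
    apply Finset.card_le_card
    intro S hS
    obtain ⟨hSC, hxS⟩ := Finset.mem_filter.mp hS
    exact Finset.mem_filter.mpr ⟨copyA R χ x y hSC hxS, hxS⟩
  have hB' : (((copiesSet R χ).filter (fun S => y ∈ S)).filter (fun S => x ∉ S)).card ≤
      ((copiesSet R χ').filter (fun S => x ∈ S)).card := by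
    apply Finset.card_le_card_of_injOn (fun S => insert x (S.erase y))
    · intro S hS
      obtain ⟨hS1, hxS⟩ := Finset.mem_filter.mp hS
      obtain ⟨hSC, hyS⟩ := Finset.mem_filter.mp hS1
      exact Finset.mem_filter.mpr ⟨copyB R χ x y hSC hxS hyS, Finset.mem_insert_self x _⟩
    · intro S₁ h1 S₂ h2 h
      obtain ⟨h11, hx1⟩ := Finset.mem_filter.mp h1
      obtain ⟨-, hy1⟩ := Finset.mem_filter.mp h11
      obtain ⟨h21, hx2⟩ := Finset.mem_filter.mp h2
      obtain ⟨-, hy2⟩ := Finset.mem_filter.mp h21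
      have h' : insert x (S₁.erase y) = insert x (S₂.erase y) := h
      have e1 : insert y ((insert x (S₁.erase y)).erase x) = S₁ := by
        rw [Finset.erase_insert (fun hh => hx1 (Finset.mem_of_mem_erase hh)),
          Finset.insert_erase hy1]
      have e2 : insert y ((insert x (S₂.erase y)).erase x) = S₂ := by
        rw [Finset.erase_insert (fun hh => hx2 (Finset.mem_of_mem_erase hh)),
          Finset.insert_erase hy2]
      rw [← e1, ← e2, h']
  have hsplit' : ((copiesSet R χ').filter (fun S => x ∈ S)).card +
      ((copiesSet R χ').filter (fun S => x ∉ S)).card = copyCount k n R χ' := by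
    rw [copyCount_eq_card]
    have h := Finset.card_filter_add_card_filter_not
      (s := copiesSet R χ') (p := fun S => x ∈ S)
    beta_reduce at h
    omega
  have hle : copyCount k n R χ' ≤ copyCount k n R χ := by
    rw [hmax]
    exact Finset.le_sup (Finset.mem_filter.mpr ⟨Finset.mem_univ _, clone_sym hχ x y⟩)
  -- combine
  have hfin : vertDeg k n R χ y ≤ vertDeg k n R χ x + (n - 2).choose (k - 2) := by omega
  have hfin' : (vertDeg k n R χ y : ℝ) ≤
      (vertDeg k n R χ x : ℝ) + ((n - 2).choose (k - 2) : ℝ) := by exact_mod_cast hfin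
  linarith
end

section
/- Let k ≥ 11, let R be the rainbow k-clique, and let H be an n-vertex T-edge-colored complete graph such that every vertex x ∈ V(H) satisfies d(x) ≥ n^{k−1}/(k^{k−1}−1). Then for every x ∈ V(H) and every pair of distinct indices i, j ∈ [k], min(|N_i(x)|, |N_j(x)|) ≤ n/2; equivalently, the second largest among |N_1(x)|, …, |N_k(x)| is at most n/2. -/
open Finset Filter

open scoped Classical

section AuxCount

variable {T : Type} {k n : ℕ}

lemma sum_colorDeg_le (χ : Fin n → Fin n → T) (x : Fin n) (C : Finset T) :
    ∑ c ∈ C, colorDeg χ x c ≤ n := by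
  classical
  have hd : (C : Set T).PairwiseDisjoint
      (fun c => (Finset.univ : Finset (Fin n)).filter (fun y => y ≠ x ∧ χ x y = c)) := by
    intro c₁ _ c₂ _ hne
    simp only [Function.onFun]
    rw [Finset.disjoint_left]
    intro y hy₁ hy₂
    simp only [Finset.mem_filter] at hy₁ hy₂
    exact hne (hy₁.2.2 ▸ hy₂.2.2 ▸ rfl)
  calc ∑ c ∈ C, colorDeg χ x c
      = (C.biUnion (fun c => (Finset.univ : Finset (Fin n)).filter
          (fun y => y ≠ x ∧ χ x y = c))).card := (Finset.card_biUnion hd).symm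
    _ ≤ (Finset.univ : Finset (Fin n)).card := Finset.card_le_card (Finset.subset_univ _)
    _ = n := by simp

lemma vertDeg_le_sum (R : Fin k → Fin k → T) (χ : Fin n → Fin n → T) (x : Fin n) :
    vertDeg k n R χ x ≤ ∑ m : Fin k, embCount k n R χ m x := by
  classical
  set Fm : Fin k → Finset (Fin k → Fin n) := fun m =>
    (Finset.univ : Finset (Fin k → Fin n)).filter
      (fun φ => Function.Injective φ ∧ φ m = x ∧
        ∀ a b : Fin k, a ≠ b → χ (φ a) (φ b) = R a b) with hFm
  have hdisj : ((Finset.univ : Finset (Fin k)) : Set (Fin k)).PairwiseDisjoint Fm := by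
    intro m₁ _ m₂ _ hne
    simp only [Function.onFun]
    rw [Finset.disjoint_left]
    intro φ h₁ h₂
    simp only [hFm, Finset.mem_filter] at h₁ h₂
    exact hne (h₁.2.1 (h₁.2.2.1.trans h₂.2.2.1.symm))
  have hcard : ∑ m : Fin k, embCount k n R χ m x = (Finset.univ.biUnion Fm).card :=
    (Finset.card_biUnion hdisj).symm
  rw [vertDeg, hcard]
  set P : Finset (Fin n) → (Fin k → Fin n) → Prop := fun S φ =>
    Function.Injective φ ∧ (∀ a, φ a ∈ S) ∧ ∀ a b : Fin k, a ≠ b → χ (φ a) (φ b) = R a b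
    with hP
  set f : Finset (Fin n) → (Fin k → Fin n) := fun S =>
    if h : ∃ φ, P S φ then h.choose else (fun _ => x) with hf
  have himg : ∀ S ∈ (Finset.powersetCard k (Finset.univ : Finset (Fin n))).filter
      (fun S => x ∈ S ∧ ∃ φ : Fin k → Fin n, Function.Injective φ ∧ (∀ a, φ a ∈ S) ∧
        ∀ a b : Fin k, a ≠ b → χ (φ a) (φ b) = R a b),
      Finset.image (f S) Finset.univ = S ∧ P S (f S) := by
    intro S hS
    simp only [Finset.mem_filter, Finset.mem_powersetCard] at hS
    obtain ⟨⟨-, hcardS⟩, -, hex⟩ := hS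
    have h : ∃ φ, P S φ := hex
    have hspec : P S (f S) := by rw [hf]; simp only [dif_pos h]; exact h.choose_spec
    refine ⟨?_, hspec⟩
    apply Finset.eq_of_subset_of_card_le
    · intro y hy
      simp only [Finset.mem_image] at hy
      obtain ⟨a, -, rfl⟩ := hy
      exact hspec.2.1 a
    · rw [Finset.card_image_of_injective _ hspec.1, Finset.card_univ, Fintype.card_fin, hcardS]
  apply Finset.card_le_card_of_injOn f
  · intro S hS
    obtain ⟨himgS, hPS⟩ := himg S hS
    simp only [Finset.mem_coe, Finset.mem_filter, Finset.mem_powersetCard] at hS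
    have hxS : x ∈ S := hS.2.1
    rw [← himgS] at hxS
    simp only [Finset.mem_image] at hxS
    obtain ⟨m, -, hm⟩ := hxS
    apply Finset.mem_biUnion.2
    exact ⟨m, Finset.mem_univ m, by
      simp only [hFm, Finset.mem_filter]
      exact ⟨Finset.mem_univ _, hPS.1, hm, hPS.2.2⟩⟩
  · intro S₁ h₁ S₂ h₂ hEq
    rw [← (himg S₁ h₁).1, ← (himg S₂ h₂).1, hEq]

lemma embCount_le_prod (R : Fin k → Fin k → T) (χ : Fin n → Fin n → T) (x : Fin n)
    (m : Fin k) :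
    embCount k n R χ m x ≤ ∏ a ∈ Finset.univ.erase m, colorDeg χ x (R m a) := by
  classical
  have hcard : ∏ a ∈ Finset.univ.erase m, colorDeg χ x (R m a)
      = ((Finset.univ.erase m).pi (fun a => (Finset.univ : Finset (Fin n)).filter
          (fun y => y ≠ x ∧ χ x y = R m a))).card := (Finset.card_pi _ _).symm
  rw [embCount, hcard]
  apply Finset.card_le_card_of_injOn (fun φ => fun a _ => φ a)
  · intro φ hφ
    simp only [Finset.mem_coe, Finset.mem_filter] at hφ
    obtain ⟨-, hinj, hm, hcol⟩ := hφ
    rw [Finset.mem_coe, Finset.mem_pi]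
    intro a ha
    have ham : a ≠ m := Finset.ne_of_mem_erase ha
    simp only [Finset.mem_filter]
    refine ⟨Finset.mem_univ _, ?_, ?_⟩
    · rw [← hm]; exact fun h => ham (hinj h)
    · rw [← hm]; exact hcol m a (Ne.symm ham)
  · intro φ h₁ ψ h₂ hEq
    simp only [Finset.mem_coe, Finset.mem_filter] at h₁ h₂
    funext c
    by_cases hc : c = m
    · rw [hc, h₁.2.2.1, h₂.2.2.1]
    · have hcmem : c ∈ Finset.univ.erase m := Finset.mem_erase.2 ⟨hc, Finset.mem_univ _⟩
      exact congrFun (congrFun hEq c) hcmem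

lemma card_Nset_le (R : Fin k → Fin k → T) (χ : Fin n → Fin n → T) (x : Fin n)
    (i : Fin k) :
    (Nset k n R χ i x).card ≤ ∑ a ∈ Finset.univ.erase i, colorDeg χ x (R i a) := by
  classical
  have hsub : Nset k n R χ i x ⊆ (Finset.univ.erase i).biUnion
      (fun a => (Finset.univ : Finset (Fin n)).filter (fun y => y ≠ x ∧ χ x y = R i a)) := by
    intro y hy
    simp only [Nset, Finset.mem_filter] at hy
    obtain ⟨-, hyx, φ, hinj, hφi, hcol, a, hφa⟩ := hy
    have hai : a ≠ i := by
      intro h; rw [h, hφi] at hφa; exact hyx hφa.symm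
    apply Finset.mem_biUnion.2
    refine ⟨a, Finset.mem_erase.2 ⟨hai, Finset.mem_univ _⟩, ?_⟩
    simp only [Finset.mem_filter]
    exact ⟨Finset.mem_univ _, hyx, by rw [← hφa, ← hφi]; exact hcol i a (Ne.symm hai)⟩
  exact le_trans (Finset.card_le_card hsub) (Finset.card_biUnion_le)

end AuxCount

section AuxAnalytic

/-- Unweighted AM-GM. -/
lemma my_amgm {ι : Type*} (s : Finset ι) (f : ι → ℝ) (hf : ∀ i ∈ s, 0 ≤ f i) :
    ∏ i ∈ s, f i ≤ ((∑ i ∈ s, f i) / s.card) ^ s.card := by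
  classical
  rcases s.eq_empty_or_nonempty with rfl | hs
  · simp
  · have hcard : (0:ℝ) < s.card := by
      exact_mod_cast Finset.card_pos.2 hs
    have hw : ∑ i ∈ s, (1:ℝ) = s.card := by simp
    have h := Real.geom_mean_le_arith_mean s (fun _ => (1:ℝ)) f
      (fun _ _ => zero_le_one) (by rw [hw]; exact hcard) hf
    rw [hw] at h
    simp only [one_mul, Real.rpow_one] at h
    have hprod_nonneg : 0 ≤ ∏ i ∈ s, f i := Finset.prod_nonneg hf
    have h2 : ((∏ i ∈ s, f i) ^ ((s.card:ℝ))⁻¹) ^ (s.card : ℕ)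
        ≤ ((∑ i ∈ s, f i) / s.card) ^ (s.card : ℕ) := by
      apply pow_le_pow_left₀ (Real.rpow_nonneg hprod_nonneg _) h
    rwa [← Real.rpow_natCast ((∏ i ∈ s, f i) ^ ((s.card:ℝ))⁻¹) s.card,
      ← Real.rpow_mul hprod_nonneg, inv_mul_cancel₀ (ne_of_gt hcard), Real.rpow_one] at h2

/-- AM-GM in the form `a² bʳ ≤ ((2a + r b)/(r+2))^(r+2)`. -/
lemma my_amgm_two (r : ℕ) (a b : ℝ) (ha : 0 ≤ a) (hb : 0 ≤ b) :
    a ^ 2 * b ^ r ≤ ((2 * a + r * b) / (r + 2)) ^ (r + 2) := by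
  classical
  have hfilter : (Finset.range (r+2)).filter (fun i => i < 2) = Finset.range 2 := by
    ext i; simp only [Finset.mem_filter, Finset.mem_range]; omega
  have hcard' : ((Finset.range (r+2)).filter (fun i => ¬ i < 2)).card = r := by
    have : (Finset.range (r+2)).filter (fun i => ¬ i < 2)
        = (Finset.range (r+2)) \ (Finset.range 2) := by
      ext i; simp only [Finset.mem_filter, Finset.mem_range, Finset.mem_sdiff]
      try omega
    rw [this, Finset.card_sdiff_of_subset (by intro i; simp only [Finset.mem_range]; omega)]
    simp
  have h := my_amgm (Finset.range (r+2)) (fun i => if i < 2 then a else b)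
    (fun i _ => by split <;> assumption)
  rw [Finset.prod_ite, Finset.sum_ite] at h
  simp only [Finset.prod_const, Finset.sum_const, hcard', hfilter, Finset.card_range,
    smul_eq_mul] at h
  convert h using 2
  · push_cast; ring

section AuxFinal

lemma my_one_add_div_pow_le (m : ℕ) (hm : 0 < m) (c : ℝ) (hc : 0 ≤ c) :
    (1 + c / m) ^ m ≤ Real.exp c := by
  have hm' : (0:ℝ) < m := by exact_mod_cast hm
  have h1 : 1 + c / m ≤ Real.exp (c / m) := by
    have := Real.add_one_le_exp (c / m)
    linarith
  calc (1 + c / m) ^ m ≤ (Real.exp (c / m)) ^ m := by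
        apply pow_le_pow_left₀ (by positivity) h1
    _ = Real.exp (m * (c / m)) := (Real.exp_nat_mul _ m).symm
    _ = Real.exp c := by rw [mul_div_cancel₀ _ (ne_of_gt hm')]

/-- `(K+3)^(K+2) ≤ 3 (K+2)^(K+2)` -/
lemma my_pow_bound1 (K : ℕ) : ((K:ℝ) + 3) ^ (K + 2) ≤ 3 * ((K:ℝ) + 2) ^ (K + 2) := by
  have h2 : (0:ℝ) < (K:ℝ) + 2 := by positivity
  have key : ((K:ℝ) + 3) ^ (K + 2) = ((K:ℝ) + 2) ^ (K+2) * (1 + 1 / ((K:ℝ)+2)) ^ (K+2) := by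
    rw [← mul_pow]
    congr 1
    field_simp
    ring
  rw [key]
  have hexp : (1 + 1 / ((K:ℝ)+2)) ^ (K+2) ≤ Real.exp 1 := by
    have := my_one_add_div_pow_le (K+2) (by omega) 1 zero_le_one
    rwa [Nat.cast_add, Nat.cast_ofNat] at this
  have he : Real.exp 1 ≤ 3 := le_of_lt (lt_trans Real.exp_one_lt_d9 (by norm_num))
  calc ((K:ℝ) + 2) ^ (K+2) * (1 + 1 / ((K:ℝ)+2)) ^ (K+2)
      ≤ ((K:ℝ) + 2) ^ (K+2) * 3 := by
        apply mul_le_mul_of_nonneg_left (le_trans hexp he) (by positivity)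
    _ = 3 * ((K:ℝ) + 2) ^ (K + 2) := by ring

/-- `(K+3)^(K+1) ≤ 8 (K+1)^(K+1)` -/
lemma my_pow_bound2 (K : ℕ) : ((K:ℝ) + 3) ^ (K + 1) ≤ 8 * ((K:ℝ) + 1) ^ (K + 1) := by
  have h2 : (0:ℝ) < (K:ℝ) + 1 := by positivity
  have key : ((K:ℝ) + 3) ^ (K + 1) = ((K:ℝ) + 1) ^ (K+1) * (1 + 2 / ((K:ℝ)+1)) ^ (K+1) := by
    rw [← mul_pow]
    congr 1
    field_simp
    ring
  rw [key]
  have hexp : (1 + 2 / ((K:ℝ)+1)) ^ (K+1) ≤ Real.exp 2 := by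
    have := my_one_add_div_pow_le (K+1) (by omega) 2 (by norm_num)
    rwa [Nat.cast_add, Nat.cast_one] at this
  have he : Real.exp 2 ≤ 8 := by
    have h1 : Real.exp 2 = (Real.exp 1) ^ 2 := by
      rw [← Real.exp_nat_mul]; norm_num
    rw [h1]
    nlinarith [Real.exp_one_lt_d9, Real.exp_pos 1]
  calc ((K:ℝ) + 1) ^ (K+1) * (1 + 2 / ((K:ℝ)+1)) ^ (K+1)
      ≤ ((K:ℝ) + 1) ^ (K+1) * 8 := by
        exact mul_le_mul_of_nonneg_left (le_trans hexp he) (by positivity)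
    _ = 8 * ((K:ℝ) + 1) ^ (K + 1) := by ring

/-- `K + 3 ≤ 2^(K-4)` for `K ≥ 8` (stated with `K = L + 8`). -/
lemma my_two_pow_bound (L : ℕ) : (L:ℝ) + 11 ≤ 2 ^ (L + 4) := by
  induction L with
  | zero => norm_num
  | succ L ih =>
    have : (2:ℝ) ^ (L + 1 + 4) = 2 * 2 ^ (L + 4) := by ring
    rw [this]
    push_cast
    push_cast at ih
    nlinarith [pow_pos (by norm_num : (0:ℝ) < 2) (L + 4)]

end AuxFinal

section FinalArith

lemma my_final (K : ℕ) (hK : 8 ≤ K) (nr A B u t D : ℝ)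
    (hA : 0 ≤ A) (hB : 0 ≤ B) (hu : 0 ≤ u) (ht : 0 ≤ t)
    (h1 : A + B + u + t ≤ nr)
    (h2 : nr / 2 < u + A) (h3 : nr / 2 < u + B)
    (hD : nr ^ (K+2) / (((K:ℝ)+3) ^ (K+2) - 1) ≤ D)
    (hDle : D ≤ u * ((A / ((K:ℝ)+1)) ^ (K+1) + (B / ((K:ℝ)+1)) ^ (K+1))
      + A * B * (t / (K:ℝ)) ^ K) : False := by
  have hK0 : (0:ℝ) < K := by
    have : (8:ℝ) ≤ (K:ℝ) := by exact_mod_cast hK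
    linarith
  have hnr : 0 < nr := by linarith
  have hAX : A ≤ nr / 2 - t := by linarith
  have hBX : B ≤ nr / 2 - t := by linarith
  have hun : u ≤ nr := by linarith
  set X : ℝ := nr / 2 - t with hX
  have hX0 : 0 ≤ X := le_trans hA hAX
  have hAn2 : A ≤ nr / 2 := by linarith
  have hBn2 : B ≤ nr / 2 := by linarith
  -- term 1 bound
  have hterm1 : u * ((A / ((K:ℝ)+1)) ^ (K+1) + (B / ((K:ℝ)+1)) ^ (K+1))
      ≤ 2 * nr ^ (K+2) / (2*((K:ℝ)+1)) ^ (K+1) := by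
    have hdiv : ((nr/2) / ((K:ℝ)+1)) ^ (K+1) = nr ^ (K+1) / (2*((K:ℝ)+1)) ^ (K+1) := by
      rw [div_div, ← div_pow]
    have h4 : u * ((A / ((K:ℝ)+1)) ^ (K+1) + (B / ((K:ℝ)+1)) ^ (K+1))
        ≤ nr * (((nr/2) / ((K:ℝ)+1)) ^ (K+1) + ((nr/2) / ((K:ℝ)+1)) ^ (K+1)) := by
      gcongr
    calc u * ((A / ((K:ℝ)+1)) ^ (K+1) + (B / ((K:ℝ)+1)) ^ (K+1))
        ≤ nr * (((nr/2) / ((K:ℝ)+1)) ^ (K+1) + ((nr/2) / ((K:ℝ)+1)) ^ (K+1)) := h4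
      _ = 2 * nr ^ (K+2) / (2*((K:ℝ)+1)) ^ (K+1) := by
          rw [hdiv, pow_succ]
          ring
  -- term 2 bound
  have hamgm := my_amgm_two K ((K:ℝ)*X/2) t (by positivity) ht
  have hsum : (2*((K:ℝ)*X/2) + (K:ℝ)*t) = (K:ℝ)*(nr/2) := by rw [hX]; ring
  rw [hsum] at hamgm
  have hKpow : (0:ℝ) < (K:ℝ)^K := by positivity
  have hX2t : X^2 * t^K ≤ 4 * (K:ℝ)^K * (nr/2)^(K+2) / ((K:ℝ)+2)^(K+2) := by
    have e1 : ((K:ℝ)*X/2)^2 * t^K = (K:ℝ)^2/4 * (X^2 * t^K) := by ring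
    have e2 : (((K:ℝ)*(nr/2))/((K:ℝ)+2))^(K+2)
        = (K:ℝ)^2/4 * (4 * (K:ℝ)^K * (nr/2)^(K+2) / ((K:ℝ)+2)^(K+2)) := by
      rw [div_pow, mul_pow]
      have e3 : (K:ℝ)^(K+2) = (K:ℝ)^K * (K:ℝ)^2 := by rw [← pow_add]
      rw [e3]
      ring
    rw [e1, e2] at hamgm
    exact (mul_le_mul_iff_right₀ (by positivity)).1 hamgm
  have hterm2 : A*B*(t/(K:ℝ))^K ≤ 4*(nr/2)^(K+2)/((K:ℝ)+2)^(K+2) := by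
    have hAB : A*B ≤ X^2 := by nlinarith
    calc A*B*(t/(K:ℝ))^K = A*B*(t^K/(K:ℝ)^K) := by rw [div_pow]
      _ ≤ X^2*(t^K/(K:ℝ)^K) := mul_le_mul_of_nonneg_right hAB (by positivity)
      _ = (X^2*t^K)/(K:ℝ)^K := by ring
      _ ≤ 4*(nr/2)^(K+2)/((K:ℝ)+2)^(K+2) := by
          rw [div_le_iff₀ hKpow]
          calc X^2*t^K ≤ 4 * (K:ℝ)^K * (nr/2)^(K+2) / ((K:ℝ)+2)^(K+2) := hX2t
            _ = 4*(nr/2)^(K+2)/((K:ℝ)+2)^(K+2) * (K:ℝ)^K := by ring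
  -- the two key combinatorial number inequalities
  have hkey1 : 4*((K:ℝ)+3)^(K+2) ≤ (2*((K:ℝ)+1))^(K+1) := by
    have hb2' := my_pow_bound2 K
    have step1 : ((K:ℝ)+3)^(K+2) ≤ ((K:ℝ)+3) * (8*((K:ℝ)+1)^(K+1)) := by
      rw [pow_succ]
      calc ((K:ℝ)+3)^(K+1) * ((K:ℝ)+3)
          ≤ (8*((K:ℝ)+1)^(K+1)) * ((K:ℝ)+3) :=
            mul_le_mul_of_nonneg_right hb2' (by positivity)
        _ = ((K:ℝ)+3) * (8*((K:ℝ)+1)^(K+1)) := by ring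
    have hpow2 : 32*((K:ℝ)+3) ≤ 2^(K+1) := by
      obtain ⟨L, rfl⟩ : ∃ L, K = L + 8 := ⟨K - 8, by omega⟩
      have hL := my_two_pow_bound L
      have e : (2:ℝ)^(L+8+1) = 32 * 2^(L+4) := by
        rw [show L+8+1 = L+4+5 by omega, pow_add]
        norm_num [mul_comm]
      rw [e]
      push_cast
      push_cast at hL
      nlinarith [hL]
    calc 4*((K:ℝ)+3)^(K+2) ≤ 4*(((K:ℝ)+3) * (8*((K:ℝ)+1)^(K+1))) := by
          apply mul_le_mul_of_nonneg_left step1 (by norm_num)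
      _ = (32*((K:ℝ)+3)) * ((K:ℝ)+1)^(K+1) := by ring
      _ ≤ 2^(K+1) * ((K:ℝ)+1)^(K+1) := mul_le_mul_of_nonneg_right hpow2 (by positivity)
      _ = (2*((K:ℝ)+1))^(K+1) := (mul_pow _ _ _).symm
  have hkey2 : 8*((K:ℝ)+3)^(K+2) ≤ (2*((K:ℝ)+2))^(K+2) := by
    have hb1' := my_pow_bound1 K
    have h24 : (24:ℝ) ≤ 2^(K+2) := by
      calc (24:ℝ) ≤ 2^5 := by norm_num
        _ ≤ 2^(K+2) := pow_le_pow_right₀ one_le_two (by omega)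
    calc 8*((K:ℝ)+3)^(K+2) ≤ 8*(3*((K:ℝ)+2)^(K+2)) := by
          apply mul_le_mul_of_nonneg_left hb1' (by norm_num)
      _ = 24 * ((K:ℝ)+2)^(K+2) := by ring
      _ ≤ 2^(K+2) * ((K:ℝ)+2)^(K+2) := mul_le_mul_of_nonneg_right h24 (by positivity)
      _ = (2*((K:ℝ)+2))^(K+2) := (mul_pow _ _ _).symm
  -- convert to bounds against nr^(K+2)/(2 (K+3)^(K+2))
  have hb1 : 2*nr^(K+2)/(2*((K:ℝ)+1))^(K+1) ≤ nr^(K+2)/(2*((K:ℝ)+3)^(K+2)) := by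
    rw [div_le_div_iff₀ (by positivity) (by positivity)]
    calc 2*nr^(K+2) * (2*((K:ℝ)+3)^(K+2)) = nr^(K+2) * (4*((K:ℝ)+3)^(K+2)) := by ring
      _ ≤ nr^(K+2) * (2*((K:ℝ)+1))^(K+1) := mul_le_mul_of_nonneg_left hkey1 (by positivity)
  have hb2 : 4*(nr/2)^(K+2)/((K:ℝ)+2)^(K+2) ≤ nr^(K+2)/(2*((K:ℝ)+3)^(K+2)) := by
    have e : 4*(nr/2)^(K+2)/((K:ℝ)+2)^(K+2) = 4*nr^(K+2)/(2*((K:ℝ)+2))^(K+2) := by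
      rw [div_pow, mul_pow, ← mul_div_assoc, div_div]
    rw [e, div_le_div_iff₀ (by positivity) (by positivity)]
    calc 4*nr^(K+2)*(2*((K:ℝ)+3)^(K+2)) = nr^(K+2)*(8*((K:ℝ)+3)^(K+2)) := by ring
      _ ≤ nr^(K+2)*(2*((K:ℝ)+2))^(K+2) := mul_le_mul_of_nonneg_left hkey2 (by positivity)
  have hhalf : nr^(K+2)/(2*((K:ℝ)+3)^(K+2)) + nr^(K+2)/(2*((K:ℝ)+3)^(K+2))
      = nr^(K+2)/((K:ℝ)+3)^(K+2) := by
    rw [← add_div, ← two_mul,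
      mul_div_mul_left _ _ (by norm_num : (2:ℝ) ≠ 0)]
  have hone : (1:ℝ) < ((K:ℝ)+3)^(K+2) := by
    apply one_lt_pow₀ (by linarith) (by omega)
  have hstrict : nr^(K+2)/((K:ℝ)+3)^(K+2) < nr^(K+2)/(((K:ℝ)+3)^(K+2) - 1) := by
    apply div_lt_div_of_pos_left (by positivity) (by linarith) (by linarith)
  linarith

end FinalArith

/-- the second largest neighborhood for the rainbow `k`-clique, `k ≥ 11`: if every
vertex has `d(x) ≥ n^{k−1}/(k^{k−1}−1)`, then for all distinct `i,j`,
`min(|N_i(x)|,|N_j(x)|) ≤ n/2`. -/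
theorem second_largest_neighborhood (k n : ℕ) (hk : 11 ≤ k)
    (χ : Fin n → Fin n → Finset (Fin k)) (hχ : IsSym χ)
    (hdeg : ∀ x : Fin n,
      (n : ℝ) ^ (k - 1) / ((k : ℝ) ^ (k - 1) - 1) ≤ (vertDeg k n (rainbowClique k) χ x : ℝ)) :
    ∀ x : Fin n, ∀ i j : Fin k, i ≠ j →
      min ((Nset k n (rainbowClique k) χ i x).card : ℝ)
          ((Nset k n (rainbowClique k) χ j x).card : ℝ) ≤ (n : ℝ) / 2 := by
  classical
  intro x i j hij
  by_contra hcon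
  push_neg at hcon
  rw [lt_min_iff] at hcon
  obtain ⟨hNi, hNj⟩ := hcon
  have hji : j ≠ i := hij.symm
  set R : Fin k → Fin k → Finset (Fin k) := rainbowClique k with hR
  set d : Finset (Fin k) → ℕ := colorDeg χ x with hd
  set s : Finset (Fin k) := (Finset.univ.erase i).erase j with hs
  have hmem_s : ∀ a, a ∈ s ↔ a ≠ j ∧ a ≠ i := by
    intro a; simp [hs, Finset.mem_erase]
  have his : i ∉ s := by rw [hmem_s]; tauto
  have hjs : j ∉ s := by rw [hmem_s]; tauto
  have hcards : s.card = k - 2 := by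
    rw [hs, Finset.card_erase_of_mem (Finset.mem_erase.2 ⟨hji, Finset.mem_univ j⟩),
      Finset.card_erase_of_mem (Finset.mem_univ i), Finset.card_univ, Fintype.card_fin]
    omega
  set K : ℕ := k - 3 with hK
  have hK8 : 8 ≤ K := by omega
  have hcards' : s.card = K + 1 := by omega
  -- abbreviations for the four sums
  set A : ℕ := ∑ a ∈ s, d {i, a} with hA
  set B : ℕ := ∑ a ∈ s, d {j, a} with hB
  set u : ℕ := d {i, j} with hu
  set tt : ℕ := ∑ c ∈ Finset.powersetCard 2 s, d c with htt
  -- pair facts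
  have pair_left_inj : ∀ (m a b : Fin k), a ≠ m → ({m,a} : Finset (Fin k)) = {m,b} → a = b := by
    intro m a b ha h
    have h2 : a ∈ ({m,b} : Finset (Fin k)) := by
      rw [← h]; simp
    simp only [Finset.mem_insert, Finset.mem_singleton] at h2
    tauto
  -- F1 : A + B + u + tt ≤ n
  set CA : Finset (Finset (Fin k)) := s.image (fun a => ({i, a} : Finset (Fin k))) with hCA
  set CB : Finset (Finset (Fin k)) := s.image (fun a => ({j, a} : Finset (Fin k))) with hCB
  set Ct : Finset (Finset (Fin k)) := Finset.powersetCard 2 s with hCt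
  have hCAspec : ∀ c ∈ CA, i ∈ c ∧ j ∉ c := by
    intro c hc
    rw [hCA, Finset.mem_image] at hc
    obtain ⟨a, ha, rfl⟩ := hc
    refine ⟨by simp, ?_⟩
    simp only [Finset.mem_insert, Finset.mem_singleton]
    rintro (h | h)
    · exact hji h
    · exact ((hmem_s a).1 ha).1 h.symm
  have hCBspec : ∀ c ∈ CB, j ∈ c ∧ i ∉ c := by
    intro c hc
    rw [hCB, Finset.mem_image] at hc
    obtain ⟨a, ha, rfl⟩ := hc
    refine ⟨by simp, ?_⟩
    simp only [Finset.mem_insert, Finset.mem_singleton]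
    rintro (h | h)
    · exact hij h
    · exact ((hmem_s a).1 ha).2 h.symm
  have hCtspec : ∀ c ∈ Ct, i ∉ c ∧ j ∉ c := by
    intro c hc
    rw [hCt, Finset.mem_powersetCard] at hc
    exact ⟨fun h => his (hc.1 h), fun h => hjs (hc.1 h)⟩
  have hdisj1 : Disjoint CA CB := Finset.disjoint_left.2
    (fun {c} hc hc' => ((hCBspec _ hc').2 (hCAspec _ hc).1).elim)
  have hdisj2 : Disjoint (CA ∪ CB) Ct := Finset.disjoint_left.2 (by
    intro c hc hc'
    rcases Finset.mem_union.1 hc with h | h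
    · exact (hCtspec c hc').1 (hCAspec c h).1
    · exact (hCtspec c hc').2 (hCBspec c h).1)
  have hdisj3 : Disjoint (CA ∪ CB ∪ Ct) {({i,j} : Finset (Fin k))} := by
    rw [Finset.disjoint_singleton_right]
    intro hc
    rcases Finset.mem_union.1 hc with h | h
    · rcases Finset.mem_union.1 h with h' | h'
      · exact (hCAspec _ h').2 (by simp)
      · exact (hCBspec _ h').2 (by simp)
    · exact (hCtspec _ h).1 (by simp)
  have hsumCA : ∑ c ∈ CA, d c = A := by
    rw [hCA, Finset.sum_image]
    intro a ha b _ h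
    exact pair_left_inj i a b ((hmem_s a).1 ha).2 h
  have hsumCB : ∑ c ∈ CB, d c = B := by
    rw [hCB, Finset.sum_image]
    intro a ha b _ h
    exact pair_left_inj j a b ((hmem_s a).1 ha).1 h
  have hF1 : A + B + tt + u ≤ n := by
    have htot := sum_colorDeg_le χ x (CA ∪ CB ∪ Ct ∪ {({i,j} : Finset (Fin k))})
    rw [Finset.sum_union hdisj3, Finset.sum_union hdisj2, Finset.sum_union hdisj1,
      hsumCA, hsumCB, Finset.sum_singleton] at htot
    exact htot
  -- F2/F3 : Nset bounds
  have hsplit_i : ∀ f : Fin k → ℕ, ∑ a ∈ Finset.univ.erase i, f a = f j + ∑ a ∈ s, f a := by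
    intro f
    rw [hs, ← Finset.add_sum_erase _ f (Finset.mem_erase.2 ⟨hji, Finset.mem_univ j⟩)]
  have hsplit_j : ∀ f : Fin k → ℕ, ∑ a ∈ Finset.univ.erase j, f a = f i + ∑ a ∈ s, f a := by
    intro f
    rw [hs, Finset.erase_right_comm, ← Finset.add_sum_erase _ f
      (Finset.mem_erase.2 ⟨hij, Finset.mem_univ i⟩)]
  have hF2 : (Nset k n R χ i x).card ≤ u + A := by
    have h := card_Nset_le R χ x i
    simp only [hR, rainbowClique] at h
    rw [hsplit_i (fun a => colorDeg χ x {i, a})] at h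
    exact h
  have hF3 : (Nset k n R χ j x).card ≤ u + B := by
    have h := card_Nset_le R χ x j
    simp only [hR, rainbowClique] at h
    rw [hsplit_j (fun a => colorDeg χ x {j, a})] at h
    have e : colorDeg χ x {j, i} = u := by rw [hu, Finset.pair_comm]
    rw [e] at h
    exact h
  -- F4/F5 : embCount at i and j
  have hprodsplit_i : ∀ f : Fin k → ℕ, ∏ a ∈ Finset.univ.erase i, f a = f j * ∏ a ∈ s, f a := by
    intro f
    rw [hs, ← Finset.mul_prod_erase _ f (Finset.mem_erase.2 ⟨hji, Finset.mem_univ j⟩)]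
  have hprodsplit_j : ∀ f : Fin k → ℕ, ∏ a ∈ Finset.univ.erase j, f a = f i * ∏ a ∈ s, f a := by
    intro f
    rw [hs, Finset.erase_right_comm, ← Finset.mul_prod_erase _ f
      (Finset.mem_erase.2 ⟨hij, Finset.mem_univ i⟩)]
  have hF4 : embCount k n R χ i x ≤ u * ∏ a ∈ s, d {i, a} := by
    have h := embCount_le_prod R χ x i
    simp only [hR, rainbowClique] at h
    rw [hprodsplit_i (fun a => colorDeg χ x {i, a})] at h
    exact h
  have hF5 : embCount k n R χ j x ≤ u * ∏ a ∈ s, d {j, a} := by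
    have h := embCount_le_prod R χ x j
    simp only [hR, rainbowClique] at h
    rw [hprodsplit_j (fun a => colorDeg χ x {j, a})] at h
    have e : colorDeg χ x {j, i} = u := by rw [hu, Finset.pair_comm]
    rw [e] at h
    exact h
  -- F6 : embCount at m ∈ s
  have hF6 : ∀ m ∈ s, embCount k n R χ m x
      ≤ (d {m, i} * d {m, j}) * ∏ a ∈ s.erase m, d {m, a} := by
    intro m hm
    have hmi : m ≠ i := ((hmem_s m).1 hm).2
    have hmj : m ≠ j := ((hmem_s m).1 hm).1
    have h := embCount_le_prod R χ x m
    simp only [hR, rainbowClique] at h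
    have e1 : ∏ a ∈ Finset.univ.erase m, colorDeg χ x {m, a}
        = d {m, i} * (d {m, j} * ∏ a ∈ s.erase m, d {m, a}) := by
      rw [← Finset.mul_prod_erase _ _ (Finset.mem_erase.2 ⟨hmi.symm, Finset.mem_univ i⟩),
        Finset.erase_right_comm,
        ← Finset.mul_prod_erase _ _
          (Finset.mem_erase.2 ⟨hmj.symm, Finset.mem_erase.2 ⟨hji, Finset.mem_univ j⟩⟩)]
      congr 2
      rw [hs, Finset.erase_right_comm (s := Finset.univ.erase i) (a := m) (b := j)]
    rw [e1, ← mul_assoc] at h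
    exact h
  -- F7 : per-m tail sums are at most tt
  have hF7 : ∀ m ∈ s, ∑ a ∈ s.erase m, d {m, a} ≤ tt := by
    intro m hm
    have hsum : ∑ a ∈ s.erase m, d {m, a}
        = ∑ c ∈ (s.erase m).image (fun a => ({m, a} : Finset (Fin k))), d c := by
      rw [Finset.sum_image]
      intro a ha b _ h
      exact pair_left_inj m a b (Finset.ne_of_mem_erase ha) h
    rw [hsum, htt]
    apply Finset.sum_le_sum_of_subset
    intro c hc
    rw [Finset.mem_image] at hc
    obtain ⟨a, ha, rfl⟩ := hc
    rw [Finset.mem_powersetCard]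
    have ham : a ≠ m := Finset.ne_of_mem_erase ha
    constructor
    · exact Finset.insert_subset hm (Finset.singleton_subset_iff.2 (Finset.mem_of_mem_erase ha))
    · exact Finset.card_pair ham.symm
  -- F8
  have hF8 : ∀ m ∈ s, (s.erase m).card = K := by
    intro m hm
    rw [Finset.card_erase_of_mem hm, hcards']
    omega
  -- F9
  have hF9 : ∑ m ∈ s, d {m, i} * d {m, j} ≤ A * B := by
    have e : ∀ m ∈ s, d {m, i} * d {m, j} = d {i, m} * d {j, m} := by
      intro m _
      rw [Finset.pair_comm m i, Finset.pair_comm m j]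
    rw [Finset.sum_congr rfl e]
    calc ∑ m ∈ s, d {i, m} * d {j, m}
        ≤ ∑ m ∈ s, d {i, m} * B := by
          apply Finset.sum_le_sum
          intro m hm
          exact Nat.mul_le_mul_left _
            (Finset.single_le_sum (f := fun a => d {j, a}) (fun a _ => Nat.zero_le _) hm)
      _ = A * B := by rw [← Finset.sum_mul]
  -- F10 : total embedding count splitting
  have hF10 : ∑ m : Fin k, embCount k n R χ m x
      = embCount k n R χ i x + (embCount k n R χ j x + ∑ m ∈ s, embCount k n R χ m x) := by
    rw [← Finset.add_sum_erase _ _ (Finset.mem_univ i),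
      ← Finset.add_sum_erase _ _ (Finset.mem_erase.2 ⟨hji, Finset.mem_univ j⟩), hs]
  -- now go to ℝ
  have hkK : (k : ℝ) = (K : ℝ) + 3 := by
    have hkk : k = K + 3 := by omega
    rw [hkk]; push_cast; ring
  have hk1 : k - 1 = K + 2 := by omega
  set D : ℝ := ((∑ m : Fin k, embCount k n R χ m x : ℕ) : ℝ) with hD
  have hdegx := hdeg x
  have hvd : (vertDeg k n R χ x : ℝ) ≤ D := by
    rw [hD]
    exact_mod_cast vertDeg_le_sum R χ x
  have hDlow : (n:ℝ) ^ (K+2) / (((K:ℝ)+3) ^ (K+2) - 1) ≤ D := by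
    rw [← hkK, ← hk1]
    exact le_trans hdegx hvd
  -- amgm for the i and j terms
  have hKpos : (0:ℝ) < (K:ℝ) + 1 := by positivity
  have amgm_i : (∏ a ∈ s, (d {i, a} : ℝ)) ≤ ((A:ℝ) / ((K:ℝ)+1)) ^ (K+1) := by
    have h := my_amgm s (fun a => (d {i, a} : ℝ)) (fun a _ => Nat.cast_nonneg _)
    rw [hcards'] at h
    have e : (∑ a ∈ s, (d {i, a} : ℝ)) = (A:ℝ) := by rw [hA]; push_cast; ring
    rw [e] at h
    exact_mod_cast h
  have amgm_j : (∏ a ∈ s, (d {j, a} : ℝ)) ≤ ((B:ℝ) / ((K:ℝ)+1)) ^ (K+1) := by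
    have h := my_amgm s (fun a => (d {j, a} : ℝ)) (fun a _ => Nat.cast_nonneg _)
    rw [hcards'] at h
    have e : (∑ a ∈ s, (d {j, a} : ℝ)) = (B:ℝ) := by rw [hB]; push_cast; ring
    rw [e] at h
    exact_mod_cast h
  have hKK : (0:ℝ) < (K:ℝ) := by
    have : (8:ℝ) ≤ (K:ℝ) := by exact_mod_cast hK8
    linarith
  have amgm_m : ∀ m ∈ s, (∏ a ∈ s.erase m, (d {m, a} : ℝ)) ≤ ((tt:ℝ) / (K:ℝ)) ^ K := by
    intro m hm
    have h := my_amgm (s.erase m) (fun a => (d {m, a} : ℝ)) (fun a _ => Nat.cast_nonneg _)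
    rw [hF8 m hm] at h
    have e : (∑ a ∈ s.erase m, (d {m, a} : ℝ)) ≤ (tt:ℝ) := by exact_mod_cast hF7 m hm
    calc (∏ a ∈ s.erase m, (d {m, a} : ℝ))
        ≤ ((∑ a ∈ s.erase m, (d {m, a} : ℝ)) / (K:ℝ)) ^ K := h
      _ ≤ ((tt:ℝ) / (K:ℝ)) ^ K :=
          pow_le_pow_left₀
            (div_nonneg (Finset.sum_nonneg fun a _ => Nat.cast_nonneg _) hKK.le)
            (div_le_div_of_nonneg_right e hKK.le) K
  -- assemble hDle
  have hDle : D ≤ (u:ℝ) * (((A:ℝ)/((K:ℝ)+1))^(K+1) + ((B:ℝ)/((K:ℝ)+1))^(K+1))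
      + (A:ℝ)*(B:ℝ)*((tt:ℝ)/(K:ℝ))^K := by
    have cast10 : D = (embCount k n R χ i x : ℝ) + ((embCount k n R χ j x : ℝ)
        + ∑ m ∈ s, (embCount k n R χ m x : ℝ)) := by
      rw [hD, hF10]; push_cast; ring
    have hi' : (embCount k n R χ i x : ℝ) ≤ (u:ℝ) * ((A:ℝ)/((K:ℝ)+1))^(K+1) := by
      have h4 : (embCount k n R χ i x : ℝ) ≤ (u:ℝ) * ∏ a ∈ s, (d {i,a}:ℝ) := by
        exact_mod_cast hF4
      exact le_trans h4 (mul_le_mul_of_nonneg_left amgm_i (Nat.cast_nonneg _))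
    have hj' : (embCount k n R χ j x : ℝ) ≤ (u:ℝ) * ((B:ℝ)/((K:ℝ)+1))^(K+1) := by
      have h5 : (embCount k n R χ j x : ℝ) ≤ (u:ℝ) * ∏ a ∈ s, (d {j,a}:ℝ) := by
        exact_mod_cast hF5
      exact le_trans h5 (mul_le_mul_of_nonneg_left amgm_j (Nat.cast_nonneg _))
    have hm' : (∑ m ∈ s, (embCount k n R χ m x : ℝ)) ≤ (A:ℝ)*(B:ℝ)*((tt:ℝ)/(K:ℝ))^K := by
      calc ∑ m ∈ s, (embCount k n R χ m x : ℝ)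
          ≤ ∑ m ∈ s, ((d {m,i}:ℝ)*(d {m,j}:ℝ)) * ((tt:ℝ)/(K:ℝ))^K := by
            apply Finset.sum_le_sum
            intro m hm
            have h6 : (embCount k n R χ m x : ℝ)
                ≤ ((d {m,i} * d {m,j} : ℕ):ℝ) * ∏ a ∈ s.erase m, (d {m,a}:ℝ) := by
              exact_mod_cast hF6 m hm
            calc (embCount k n R χ m x : ℝ)
                ≤ ((d {m,i} * d {m,j} : ℕ):ℝ) * ∏ a ∈ s.erase m, (d {m,a}:ℝ) := h6
              _ ≤ ((d {m,i} * d {m,j} : ℕ):ℝ) * ((tt:ℝ)/(K:ℝ))^K :=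
                  mul_le_mul_of_nonneg_left (amgm_m m hm) (Nat.cast_nonneg _)
              _ = ((d {m,i}:ℝ)*(d {m,j}:ℝ)) * ((tt:ℝ)/(K:ℝ))^K := by push_cast; ring
        _ = (∑ m ∈ s, (d {m,i}:ℝ)*(d {m,j}:ℝ)) * ((tt:ℝ)/(K:ℝ))^K := by
            rw [Finset.sum_mul]
        _ ≤ (A:ℝ)*(B:ℝ)*((tt:ℝ)/(K:ℝ))^K := by
            apply mul_le_mul_of_nonneg_right ?_ (by positivity)
            have h9 : (∑ m ∈ s, (d {m,i}:ℝ)*(d {m,j}:ℝ)) = ((∑ m ∈ s, d {m,i} * d {m,j} : ℕ):ℝ) := by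
              push_cast; ring
            rw [h9]
            exact_mod_cast hF9
    linarith [cast10, hi', hj', hm']
  -- final numeric inequalities
  have h1r : (A:ℝ) + (B:ℝ) + (u:ℝ) + (tt:ℝ) ≤ (n:ℝ) := by
    have := (Nat.cast_le (α := ℝ)).2 hF1
    push_cast at this
    linarith
  have h2r : (n:ℝ)/2 < (u:ℝ) + (A:ℝ) := by
    have := (Nat.cast_le (α := ℝ)).2 hF2
    push_cast at this
    linarith
  have h3r : (n:ℝ)/2 < (u:ℝ) + (B:ℝ) := by
    have := (Nat.cast_le (α := ℝ)).2 hF3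
    push_cast at this
    linarith
  exact my_final K hK8 (n:ℝ) (A:ℝ) (B:ℝ) (u:ℝ) (tt:ℝ) D
    (Nat.cast_nonneg _) (Nat.cast_nonneg _) (Nat.cast_nonneg _) (Nat.cast_nonneg _)
    h1r h2r h3r hDlow hDle
end AuxAnalytic
end
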